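/- For 0 < q < 1, the fractional q-integration operator I^α_{q,0+} of order α > 0 is bounded on L^1_q[0,b]: ‖I^α_{q,0+} f‖_{L^1_q[0,b]} ≤ (b^α/Γ_q(α+1)) ‖f‖_{L^1_q[0,b]}. -/

import Mathlib

noncomputable section
open Real

/-- q-bracket [α]_q = (1-q^α)/(1-q) (real exponent). -/
def qBracket (q α : ℝ) : ℝ := (1 - q ^ α) / (1 - q)

/-- infinite q-Pochhammer (a;q)_∞ = ∏_{k=0}^∞ (1 - q^k a). -/
def qPochInf (q a : ℝ) : ℝ := ∏' k : ℕ, (1 - q ^ k * a)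

/-- (a;q)_α = (a;q)_∞ / (q^α a;q)_∞. -/
def qPoch (q a α : ℝ) : ℝ := qPochInf q a / qPochInf q (q ^ α * a)

/-- q-Gamma function. -/
def qGamma (q x : ℝ) : ℝ := qPochInf q q / qPochInf q (q ^ x) * (1 - q) ^ (1 - x)

/-- Jackson q-integral ∫₀^a f(x) d_q x. -/
def jackson (q a : ℝ) (f : ℝ → ℝ) : ℝ := (1 - q) * a * ∑' m : ℕ, q ^ m * f (a * q ^ m)

/-- Jackson q-derivative. -/
def Dq (q : ℝ) (f : ℝ → ℝ) (x : ℝ) : ℝ := (f x - f (q * x)) / (x * (1 - q))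

/-- Riemann–Liouville fractional q-integral of order α with lower limit 0 (I⁰ = id). -/
def Iq (q α : ℝ) (f : ℝ → ℝ) (x : ℝ) : ℝ :=
  if α = 0 then f x
  else x ^ (α - 1) / qGamma q α * jackson q x (fun t => qPoch q (q * t / x) (α - 1) * f t)

/-- Riemann–Liouville fractional q-derivative D^α = D_q^{⌈α⌉} I^{⌈α⌉-α}. -/
def DqRL (q α : ℝ) (f : ℝ → ℝ) (x : ℝ) : ℝ :=
  (fun g => Dq q g)^[⌈α⌉₊] (fun y => Iq q ((⌈α⌉₊ : ℝ) - α) f y) x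

/-- bi-ordinal Hilfer fractional q-derivative of orders α,β and type μ. -/
def DbiHilfer (q α β μ : ℝ) (f : ℝ → ℝ) (x : ℝ) : ℝ :=
  Iq q (μ * (1 - α)) (fun y => Dq q (fun z => Iq q ((1 - μ) * (1 - β)) f z) y) x

/-- membership in L¹_q[0,b] : the defining Jackson series converges absolutely. -/
def MemL1q (q b : ℝ) (f : ℝ → ℝ) : Prop := Summable (fun m : ℕ => q ^ m * |f (b * q ^ m)|)

/-- the L¹_q[0,b] norm. -/
def L1qNorm (q b : ℝ) (f : ℝ → ℝ) : ℝ := (1 - q) * b * ∑' m : ℕ, q ^ m * |f (b * q ^ m)|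

namespace QProofAux

variable {q : ℝ}

lemma abs_log_one_sub_le (hq0 : 0 < q) (hq1 : q < 1) {a : ℝ} (ha0 : 0 ≤ a) (ha1 : a < 1)
    (k : ℕ) : |Real.log (1 - q ^ k * a)| ≤ a / (1 - a) * q ^ k := by
  have hqk : 0 < q ^ k := pow_pos hq0 k
  have hqk1 : q ^ k ≤ 1 := pow_le_one₀ hq0.le hq1.le
  have h1 : q ^ k * a ≤ a := by nlinarith
  have h2 : 0 ≤ q ^ k * a := by positivity
  have h3 : 0 < 1 - q ^ k * a := by nlinarith
  have hlog : Real.log (1 - q ^ k * a) ≤ 0 :=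
    Real.log_nonpos (by nlinarith) (by nlinarith)
  rw [abs_of_nonpos hlog]
  have h4 : Real.log (1 - q ^ k * a)⁻¹ ≤ (1 - q ^ k * a)⁻¹ - 1 :=
    Real.log_le_sub_one_of_pos (by positivity)
  rw [Real.log_inv] at h4
  have h5 : (1 - q ^ k * a)⁻¹ - 1 = q ^ k * a / (1 - q ^ k * a) := by
    field_simp
    ring
  rw [h5] at h4
  have h6 : q ^ k * a / (1 - q ^ k * a) ≤ q ^ k * a / (1 - a) := by
    apply div_le_div_of_nonneg_left h2 (by linarith) (by nlinarith)
  calc -Real.log (1 - q ^ k * a) ≤ q ^ k * a / (1 - a) := by linarith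
    _ = a / (1 - a) * q ^ k := by ring

lemma summable_log (hq0 : 0 < q) (hq1 : q < 1) {a : ℝ} (ha0 : 0 ≤ a) (ha1 : a < 1) :
    Summable fun k : ℕ => Real.log (1 - q ^ k * a) := by
  apply Summable.of_abs
  apply Summable.of_nonneg_of_le (fun k => abs_nonneg _)
    (abs_log_one_sub_le hq0 hq1 ha0 ha1)
  exact (summable_geometric_of_lt_one hq0.le hq1).mul_left _

lemma factor_pos (hq0 : 0 < q) (hq1 : q < 1) {a : ℝ} (ha0 : 0 ≤ a) (ha1 : a < 1) (k : ℕ) :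
    0 < 1 - q ^ k * a := by
  have hqk : 0 < q ^ k := pow_pos hq0 k
  have hqk1 : q ^ k ≤ 1 := pow_le_one₀ hq0.le hq1.le
  nlinarith

lemma pochInf_eq_exp (hq0 : 0 < q) (hq1 : q < 1) {a : ℝ} (ha0 : 0 ≤ a) (ha1 : a < 1) :
    qPochInf q a = Real.exp (∑' k : ℕ, Real.log (1 - q ^ k * a)) := by
  have h := Real.rexp_tsum_eq_tprod (f := fun (k : ℕ) => 1 - q ^ k * a)
    (fun k => factor_pos hq0 hq1 ha0 ha1 k) (summable_log hq0 hq1 ha0 ha1)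
  have h2 := h
  simpa [qPochInf] using h2.symm

lemma pochInf_pos (hq0 : 0 < q) (hq1 : q < 1) {a : ℝ} (ha0 : 0 ≤ a) (ha1 : a < 1) :
    0 < qPochInf q a := by
  rw [pochInf_eq_exp hq0 hq1 ha0 ha1]; exact Real.exp_pos _

lemma pochInf_le_one (hq0 : 0 < q) (hq1 : q < 1) {a : ℝ} (ha0 : 0 ≤ a) (ha1 : a < 1) :
    qPochInf q a ≤ 1 := by
  rw [pochInf_eq_exp hq0 hq1 ha0 ha1]
  have h : (∑' k : ℕ, Real.log (1 - q ^ k * a)) ≤ 0 := by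
    apply tsum_nonpos
    intro k
    apply Real.log_nonpos (factor_pos hq0 hq1 ha0 ha1 k).le
    have : 0 ≤ q ^ k * a := by positivity
    linarith
  calc Real.exp (∑' k : ℕ, Real.log (1 - q ^ k * a)) ≤ Real.exp 0 := Real.exp_le_exp.2 h
    _ = 1 := Real.exp_zero

lemma pochInf_anti (hq0 : 0 < q) (hq1 : q < 1) {a a' : ℝ} (ha0 : 0 ≤ a) (haa : a ≤ a')
    (ha1 : a' < 1) : qPochInf q a' ≤ qPochInf q a := by
  rw [pochInf_eq_exp hq0 hq1 ha0 (lt_of_le_of_lt haa ha1),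
    pochInf_eq_exp hq0 hq1 (ha0.trans haa) ha1]
  apply Real.exp_le_exp.2
  refine Summable.tsum_le_tsum (fun k => ?_) (summable_log hq0 hq1 (ha0.trans haa) ha1)
    (summable_log hq0 hq1 ha0 (lt_of_le_of_lt haa ha1))
  have hqk : 0 ≤ q ^ k := (pow_pos hq0 k).le
  exact Real.log_le_log (factor_pos hq0 hq1 (ha0.trans haa) ha1 k) (by nlinarith)

lemma multipliable_pochInf (hq0 : 0 < q) (hq1 : q < 1) {a : ℝ} (ha0 : 0 ≤ a) (ha1 : a < 1) :
    Multipliable fun k : ℕ => 1 - q ^ k * a :=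
  Real.multipliable_of_summable_log (f := fun (k : ℕ) => 1 - q ^ k * a)
    (fun k => factor_pos hq0 hq1 ha0 ha1 k) (summable_log hq0 hq1 ha0 ha1)

set_option maxHeartbeats 1000000 in
lemma pochInf_rec (hq0 : 0 < q) (hq1 : q < 1) {a : ℝ} (ha0 : 0 ≤ a) (ha1 : a < 1) :
    qPochInf q a = (1 - a) * qPochInf q (q * a) := by
  have hqa0 : 0 ≤ q * a := by positivity
  have hqa1 : q * a < 1 := by nlinarith
  have hm : Multipliable fun k : ℕ => (1 : ℝ) - q ^ (k + 1) * a := by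
    have := multipliable_pochInf hq0 hq1 hqa0 hqa1
    apply this.congr
    intro k
    rw [pow_succ]
    ring
  have h := tprod_eq_zero_mul' (f := fun k : ℕ => 1 - q ^ k * a) hm
  rw [qPochInf, h]
  congr 1
  · simp
  · rw [qPochInf]
    apply tprod_congr
    intro k
    show (1 : ℝ) - q ^ (k + 1) * a = 1 - q ^ k * (q * a)
    rw [pow_succ]
    ring


/-! ### rpow layer -/

def Ppow (q s : ℝ) : ℝ := qPochInf q (q ^ s)

lemma qpow_mem (hq0 : 0 < q) (hq1 : q < 1) {s : ℝ} (hs : 0 < s) :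
    0 ≤ q ^ s ∧ q ^ s < 1 :=
  ⟨(Real.rpow_pos_of_pos hq0 s).le, Real.rpow_lt_one hq0.le hq1 hs⟩

lemma Ppow_pos (hq0 : 0 < q) (hq1 : q < 1) {s : ℝ} (hs : 0 < s) : 0 < Ppow q s :=
  pochInf_pos hq0 hq1 (qpow_mem hq0 hq1 hs).1 (qpow_mem hq0 hq1 hs).2

lemma Ppow_le_one (hq0 : 0 < q) (hq1 : q < 1) {s : ℝ} (hs : 0 < s) : Ppow q s ≤ 1 :=
  pochInf_le_one hq0 hq1 (qpow_mem hq0 hq1 hs).1 (qpow_mem hq0 hq1 hs).2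

lemma Ppow_mono (hq0 : 0 < q) (hq1 : q < 1) {s s' : ℝ} (hs : 0 < s) (hss : s ≤ s') :
    Ppow q s ≤ Ppow q s' := by
  have h1 : q ^ s' ≤ q ^ s := Real.rpow_le_rpow_of_exponent_ge hq0 hq1.le hss
  exact pochInf_anti hq0 hq1 (qpow_mem hq0 hq1 (lt_of_lt_of_le hs hss)).1 h1
    (qpow_mem hq0 hq1 hs).2

lemma Ppow_rec (hq0 : 0 < q) (hq1 : q < 1) {s : ℝ} (hs : 0 < s) :
    Ppow q s = (1 - q ^ s) * Ppow q (s + 1) := by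
  have h := pochInf_rec hq0 hq1 (qpow_mem hq0 hq1 hs).1 (qpow_mem hq0 hq1 hs).2
  rw [Ppow, h, Ppow]
  congr 2
  rw [Real.rpow_add hq0, Real.rpow_one]
  ring

/-! ### the coefficients c_m and the key identity -/

/-- the coefficient (q^{m+1};q)_{α-1} written via `Ppow`. -/
def cQ (q α : ℝ) (m : ℕ) : ℝ := Ppow q ((m : ℝ) + 1) / Ppow q ((m : ℝ) + α)

lemma cQ_pos (hq0 : 0 < q) (hq1 : q < 1) {α : ℝ} (hα : 0 < α) (m : ℕ) :
    0 < cQ q α m := by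
  apply div_pos (Ppow_pos hq0 hq1 (by positivity)) (Ppow_pos hq0 hq1 (by positivity))

lemma cQ_le (hq0 : 0 < q) (hq1 : q < 1) {α : ℝ} (hα : 0 < α) (m : ℕ) :
    cQ q α m ≤ (Ppow q α)⁻¹ := by
  have h1 : Ppow q ((m : ℝ) + 1) ≤ 1 := Ppow_le_one hq0 hq1 (by positivity)
  have h2 : Ppow q α ≤ Ppow q ((m : ℝ) + α) := Ppow_mono hq0 hq1 hα (by
    have : (0 : ℝ) ≤ (m : ℝ) := Nat.cast_nonneg m
    linarith)
  have h3 : 0 < Ppow q α := Ppow_pos hq0 hq1 hα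
  have h4 : 0 < Ppow q ((m : ℝ) + α) := Ppow_pos hq0 hq1 (by positivity)
  have h5 : (Ppow q ((m : ℝ) + α))⁻¹ ≤ (Ppow q α)⁻¹ := by
    apply inv_anti₀ h3 h2
  calc cQ q α m = Ppow q ((m : ℝ) + 1) * (Ppow q ((m : ℝ) + α))⁻¹ := by
        rw [cQ, div_eq_mul_inv]
    _ ≤ 1 * (Ppow q α)⁻¹ := by
        apply mul_le_mul h1 h5 (by positivity) (by norm_num)
    _ = (Ppow q α)⁻¹ := one_mul _

lemma key_identity (hq0 : 0 < q) (hq1 : q < 1) {α : ℝ} (hα : 0 < α) (j : ℕ) :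
    ∑ n ∈ Finset.range (j + 1), (q ^ α) ^ n * cQ q α (j - n)
      = Ppow q ((j : ℝ) + 1) / (Ppow q ((j : ℝ) + 1 + α) * (1 - q ^ α)) := by
  induction j with
  | zero =>
      have hrec : Ppow q α = (1 - q ^ α) * Ppow q (α + 1) := Ppow_rec hq0 hq1 hα
      have h1 : 0 < Ppow q (α + 1) := Ppow_pos hq0 hq1 (by linarith)
      have h2 : (0 : ℝ) < 1 - q ^ α := by
        have := (qpow_mem hq0 hq1 hα).2; linarith
      rw [Finset.sum_range_one]
      norm_num [cQ]
      rw [hrec, show (1 : ℝ) + α = α + 1 by ring]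
      rw [mul_comm (1 - q ^ α) (Ppow q (α + 1)), ← div_div]
  | succ j ih =>
      have hsum : ∑ n ∈ Finset.range (j + 2), (q ^ α) ^ n * cQ q α (j + 1 - n)
          = cQ q α (j + 1) + q ^ α * ∑ n ∈ Finset.range (j + 1), (q ^ α) ^ n * cQ q α (j - n) := by
        rw [Finset.sum_range_succ']
        simp only [pow_zero, one_mul, Nat.sub_zero]
        rw [Finset.mul_sum]
        rw [add_comm]
        congr 1
        apply Finset.sum_congr rfl
        intro n _
        have : j + 1 - (n + 1) = j - n := by omega
        rw [this, pow_succ]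
        ring
      have e1 : Ppow q ((j : ℝ) + 1) = (1 - q ^ ((j : ℝ) + 1)) * Ppow q ((j : ℝ) + 1 + 1) :=
        Ppow_rec hq0 hq1 (s := (j : ℝ) + 1) (by positivity)
      have e2 : Ppow q ((j : ℝ) + 1 + α) = (1 - q ^ ((j : ℝ) + 1 + α)) * Ppow q ((j : ℝ) + 1 + α + 1) :=
        Ppow_rec hq0 hq1 (s := (j : ℝ) + 1 + α) (by positivity)
      have ecast1 : ((j : ℝ) + 1) + 1 = ((j + 1 : ℕ) : ℝ) + 1 := by push_cast; ring
      have ecast2 : ((j : ℝ) + 1 + α) + 1 = ((j + 1 : ℕ) : ℝ) + 1 + α := by push_cast; ring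
      have e3 : cQ q α (j + 1)
          = Ppow q (((j + 1 : ℕ) : ℝ) + 1) / ((1 - q ^ ((j : ℝ) + 1 + α)) * Ppow q (((j + 1 : ℕ) : ℝ) + 1 + α)) := by
        rw [cQ, show ((j + 1 : ℕ) : ℝ) + α = (j : ℝ) + 1 + α by push_cast; ring, e2, ecast2]
      have hsub : q ^ ((j : ℝ) + 1 + α) = q ^ ((j : ℝ) + 1) * q ^ α := by
        rw [← Real.rpow_add hq0]
      rw [hsum, ih, e3, e1, e2, ecast1, ecast2, hsub]
      set A := Ppow q (((j + 1 : ℕ) : ℝ) + 1) with hA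
      set B := Ppow q (((j + 1 : ℕ) : ℝ) + 1 + α) with hB
      set u := q ^ ((j : ℝ) + 1) with hu
      set v := q ^ α with hv
      have hBpos : 0 < B := Ppow_pos hq0 hq1 (by positivity)
      have huv : (0 : ℝ) < 1 - u * v := by
        rw [hu, hv, ← Real.rpow_add hq0]
        have := (qpow_mem hq0 hq1 (show (0:ℝ) < (j : ℝ) + 1 + α by positivity)).2
        linarith
      have hvv : (0 : ℝ) < 1 - v := by
        have := (qpow_mem hq0 hq1 hα).2; linarith
      have hupos : 0 < u := Real.rpow_pos_of_pos hq0 _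
      field_simp
      ring
lemma key_bound (hq0 : 0 < q) (hq1 : q < 1) {α : ℝ} (hα : 0 < α) (j : ℕ) :
    ∑ n ∈ Finset.range (j + 1), (q ^ α) ^ n * cQ q α (j - n) ≤ (1 - q ^ α)⁻¹ := by
  rw [key_identity hq0 hq1 hα j]
  have hqa : (0 : ℝ) < 1 - q ^ α := by
    have := (qpow_mem hq0 hq1 hα).2; linarith
  have h1 : 0 < Ppow q ((j : ℝ) + 1 + α) := Ppow_pos hq0 hq1 (by positivity)
  have h2 : Ppow q ((j : ℝ) + 1) ≤ Ppow q ((j : ℝ) + 1 + α) :=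
    Ppow_mono hq0 hq1 (by positivity) (by linarith)
  rw [div_le_iff₀ (by positivity)]
  calc Ppow q ((j : ℝ) + 1) ≤ Ppow q ((j : ℝ) + 1 + α) := h2
    _ = (1 - q ^ α)⁻¹ * (Ppow q ((j : ℝ) + 1 + α) * (1 - q ^ α)) := by
        field_simp
    _ ≤ (1 - q ^ α)⁻¹ * (Ppow q ((j : ℝ) + 1 + α) * (1 - q ^ α)) := le_refl _


/-! ### q-Gamma facts -/

lemma qGamma_pos (hq0 : 0 < q) (hq1 : q < 1) {x : ℝ} (hx : 0 < x) : 0 < qGamma q x := by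
  rw [qGamma]
  have h1 : 0 < qPochInf q q := pochInf_pos hq0 hq1 hq0.le hq1
  have h2 : 0 < qPochInf q (q ^ x) := Ppow_pos hq0 hq1 hx
  have h3 : 0 < (1 - q) ^ (1 - x) := Real.rpow_pos_of_pos (by linarith) _
  positivity

lemma qGamma_rec (hq0 : 0 < q) (hq1 : q < 1) {α : ℝ} (hα : 0 < α) :
    qGamma q (α + 1) = qGamma q α * ((1 - q ^ α) / (1 - q)) := by
  have hrec : Ppow q α = (1 - q ^ α) * Ppow q (α + 1) := Ppow_rec hq0 hq1 hα
  have h1q : (0 : ℝ) < 1 - q := by linarith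
  have hP1 : 0 < Ppow q (α + 1) := Ppow_pos hq0 hq1 (by linarith)
  have hPα : 0 < Ppow q α := Ppow_pos hq0 hq1 hα
  have hqa : (0 : ℝ) < 1 - q ^ α := by
    have := (qpow_mem hq0 hq1 hα).2; linarith
  have hexp : (1 - q) ^ (1 - (α + 1)) = (1 - q) ^ (1 - α) * (1 - q)⁻¹ := by
    rw [show (1 : ℝ) - (α + 1) = (1 - α) + (-1) by ring, Real.rpow_add h1q,
      Real.rpow_neg_one]
  rw [qGamma, qGamma, hexp]
  show qPochInf q q / Ppow q (α + 1) * ((1 - q) ^ (1 - α) * (1 - q)⁻¹)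
    = qPochInf q q / Ppow q α * (1 - q) ^ (1 - α) * ((1 - q ^ α) / (1 - q))
  rw [hrec]
  field_simp

/-! ### relating `qPoch` at the Jackson nodes to `cQ` -/

lemma qpoch_eq_cQ (hq0 : 0 < q) (hq1 : q < 1) {α : ℝ} (hα : 0 < α) (m : ℕ) :
    qPoch q (q ^ (m + 1)) (α - 1) = cQ q α m := by
  have h1 : (q : ℝ) ^ (m + 1) = q ^ (((m : ℝ)) + 1) := by
    rw [show ((m : ℝ) + 1) = ((m + 1 : ℕ) : ℝ) by push_cast; ring, Real.rpow_natCast]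
  have h2 : q ^ (α - 1) * q ^ ((m : ℝ) + 1) = q ^ ((m : ℝ) + α) := by
    rw [← Real.rpow_add hq0]
    congr 1
    ring
  rw [qPoch, h1, h2]
  rfl

end QProofAux

set_option maxHeartbeats 2000000 in
open QProofAux in
theorem Iq_L1_bounded (q α b : ℝ) (f : ℝ → ℝ) (hq0 : 0 < q) (hq1 : q < 1)
    (hα : 0 < α) (hb : 0 < b) (hf : MemL1q q b f) :
    L1qNorm q b (fun x => Iq q α f x) ≤ b ^ α / qGamma q (α + 1) * L1qNorm q b f := by
  classical
  have h1q : (0 : ℝ) < 1 - q := by linarith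
  set F : ℕ → ℝ := fun j => |f (b * q ^ j)| with hF
  have hF0 : ∀ j, 0 ≤ F j := fun j => abs_nonneg _
  have hfs : Summable (fun j : ℕ => q ^ j * F j) := hf
  have hQa0 : 0 < q ^ α := Real.rpow_pos_of_pos hq0 α
  have hQa1 : q ^ α < 1 := Real.rpow_lt_one hq0.le hq1 hα
  have hQa1' : (0 : ℝ) < 1 - q ^ α := by linarith
  have hc0 : ∀ m, 0 ≤ cQ q α m := fun m => (cQ_pos hq0 hq1 hα m).le
  have hC00 : (0 : ℝ) ≤ (Ppow q α)⁻¹ := inv_nonneg.2 (Ppow_pos hq0 hq1 hα).le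
  have hcle : ∀ m, cQ q α m ≤ (Ppow q α)⁻¹ := cQ_le hq0 hq1 hα
  have hΓ : 0 < qGamma q α := qGamma_pos hq0 hq1 hα
  have hΓ1 : 0 < qGamma q (α + 1) := qGamma_pos hq0 hq1 (by linarith)
  have hΓrec : qGamma q (α + 1) = qGamma q α * ((1 - q ^ α) / (1 - q)) :=
    qGamma_rec hq0 hq1 hα
  -- shifted summability of the inner series
  have hshiftF : ∀ n : ℕ, Summable (fun m : ℕ => q ^ m * F (n + m)) := by
    intro n
    have h1 : Summable (fun m : ℕ => q ^ (m + n) * F (m + n)) :=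
      (summable_nat_add_iff n).2 hfs
    have h2 : Summable (fun m : ℕ => (q ^ n)⁻¹ * (q ^ (m + n) * F (m + n))) :=
      h1.mul_left _
    apply h2.congr
    intro m
    have hqn : (q : ℝ) ^ n ≠ 0 := by positivity
    rw [pow_add]
    field_simp
    rw [add_comm m n]
  have hshift : ∀ n : ℕ, Summable (fun m : ℕ => q ^ m * (cQ q α m * F (n + m))) := by
    intro n
    apply Summable.of_nonneg_of_le
      (fun m => mul_nonneg (by positivity) (mul_nonneg (hc0 m) (hF0 _)))
      (fun m => ?_) (((hshiftF n).mul_left ((Ppow q α)⁻¹)))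
    have h1 : cQ q α m * F (n + m) ≤ (Ppow q α)⁻¹ * F (n + m) :=
      mul_le_mul_of_nonneg_right (hcle m) (hF0 _)
    calc q ^ m * (cQ q α m * F (n + m)) ≤ q ^ m * ((Ppow q α)⁻¹ * F (n + m)) := by
          apply mul_le_mul_of_nonneg_left h1 (by positivity)
      _ = (Ppow q α)⁻¹ * (q ^ m * F (n + m)) := by ring
  set I : ℕ → ℝ := fun n => ∑' m : ℕ, q ^ m * (cQ q α m * F (n + m)) with hI
  have hI0 : ∀ n, 0 ≤ I n := fun n =>
    tsum_nonneg (fun m => mul_nonneg (by positivity) (mul_nonneg (hc0 m) (hF0 _)))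
  set u : ℕ → ℝ := fun n => (q ^ α) ^ n * q ^ n * I n with hu
  have hu0 : ∀ n, 0 ≤ u n := fun n => by
    have := hI0 n; positivity
  -- the rearranged double sum
  set G : ℕ × ℕ → ℝ := fun p =>
    if p.2 ≤ p.1 then (q ^ α) ^ p.2 * q ^ p.1 * (cQ q α (p.1 - p.2) * F p.1) else 0 with hG
  have hG0 : ∀ p, 0 ≤ G p := by
    intro p
    rw [hG]
    dsimp only
    split
    · have := hc0 (p.1 - p.2); have := hF0 p.1; positivity
    · exact le_refl 0
  have hGle : ∀ p : ℕ × ℕ, G p ≤ (q ^ p.1 * F p.1) * ((Ppow q α)⁻¹ * (q ^ α) ^ p.2) := by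
    intro p
    rw [hG]
    dsimp only
    split
    · have h1 : cQ q α (p.1 - p.2) ≤ (Ppow q α)⁻¹ := hcle _
      have h2 : (0 : ℝ) ≤ (q ^ α) ^ p.2 := by positivity
      have h3 : (0 : ℝ) ≤ q ^ p.1 := by positivity
      have h4 := hF0 p.1
      have h5 := hc0 (p.1 - p.2)
      calc (q ^ α) ^ p.2 * q ^ p.1 * (cQ q α (p.1 - p.2) * F p.1)
          ≤ (q ^ α) ^ p.2 * q ^ p.1 * ((Ppow q α)⁻¹ * F p.1) := by
            apply mul_le_mul_of_nonneg_left
              (mul_le_mul_of_nonneg_right h1 h4) (by positivity)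
        _ = (q ^ p.1 * F p.1) * ((Ppow q α)⁻¹ * (q ^ α) ^ p.2) := by ring
    · have h1 : (0 : ℝ) ≤ q ^ p.1 * F p.1 := by have := hF0 p.1; positivity
      have h2 : (0 : ℝ) ≤ (Ppow q α)⁻¹ * (q ^ α) ^ p.2 := by positivity
      positivity
  have hprod : Summable (fun p : ℕ × ℕ =>
      (q ^ p.1 * F p.1) * ((Ppow q α)⁻¹ * (q ^ α) ^ p.2)) :=
    Summable.mul_of_nonneg hfs
      ((summable_geometric_of_lt_one hQa0.le hQa1).mul_left _)
      (Pi.le_def.mpr (fun j => mul_nonneg (by positivity) (hF0 j)))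
      (Pi.le_def.mpr (fun n => by positivity))
  have hGsum : Summable G := Summable.of_nonneg_of_le hG0 hGle hprod
  set e : ℕ × ℕ → ℕ × ℕ := fun p => (p.1 + p.2, p.1) with he_def
  have he : Function.Injective e := by
    intro p p' h
    rw [he_def] at h
    simp only [Prod.mk.injEq] at h
    obtain ⟨h1, h2⟩ := h
    have : p.2 = p'.2 := by omega
    exact Prod.ext h2 this
  have hGe : ∀ p : ℕ × ℕ,
      G (e p) = (q ^ α) ^ p.1 * q ^ (p.1 + p.2) * (cQ q α p.2 * F (p.1 + p.2)) := by
    intro p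
    rw [hG, he_def]
    dsimp only
    rw [if_pos (Nat.le_add_right _ _), Nat.add_sub_cancel_left]
  set a : ℕ × ℕ → ℝ := fun p =>
    (q ^ α) ^ p.1 * q ^ (p.1 + p.2) * (cQ q α p.2 * F (p.1 + p.2)) with ha
  have hasum : Summable a := by
    have h1 : Summable (G ∘ e) := hGsum.comp_injective he
    exact h1.congr hGe
  have hu_eq : ∀ n, u n = ∑' m : ℕ, a (n, m) := by
    intro n
    rw [hu]
    dsimp only
    rw [hI]
    dsimp only
    rw [← tsum_mul_left]
    apply tsum_congr
    intro m
    rw [ha]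
    dsimp only
    rw [pow_add]
    ring
  have hu_sum : Summable u := by
    have h1 : Summable (fun n => ∑' m : ℕ, a (n, m)) :=
      (hasum.hasSum.prod_fiberwise (fun n => (hasum.prod_factor n).hasSum)).summable
    exact h1.congr (fun n => (hu_eq n).symm)
  have hstep1 : ∑' n, u n = ∑' p : ℕ × ℕ, a p := by
    rw [Summable.tsum_prod' hasum (fun n => hasum.prod_factor n)]
    exact tsum_congr hu_eq
  have hstep2 : ∑' p : ℕ × ℕ, a p ≤ ∑' p : ℕ × ℕ, G p := by
    have h1 := tsum_comp_le_tsum_of_inj hGsum hG0 he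
    have h2 : ∑' p : ℕ × ℕ, a p = ∑' p : ℕ × ℕ, (G ∘ e) p :=
      tsum_congr (fun p => (hGe p).symm)
    rw [h2]
    exact h1
  have hGfac : ∀ j, Summable (fun n => G (j, n)) := fun j => hGsum.prod_factor j
  have hstep3 : ∑' p : ℕ × ℕ, G p = ∑' j, ∑' n, G (j, n) :=
    Summable.tsum_prod' hGsum hGfac
  have h4 : ∀ j, ∑' n, G (j, n)
      = q ^ j * F j * ∑ n ∈ Finset.range (j + 1), (q ^ α) ^ n * cQ q α (j - n) := by
    intro j
    rw [tsum_eq_sum (s := Finset.range (j + 1))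
      (by
        intro n hn
        have hnj : ¬ n ≤ j := by
          simp only [Finset.mem_range] at hn
          omega
        rw [hG]
        dsimp only
        rw [if_neg hnj])]
    rw [Finset.mul_sum]
    apply Finset.sum_congr rfl
    intro n hn
    have hnj : n ≤ j := by
      simp only [Finset.mem_range] at hn
      omega
    rw [hG]
    dsimp only
    rw [if_pos hnj]
    ring
  have h5 : ∀ j, ∑' n, G (j, n) ≤ (1 - q ^ α)⁻¹ * (q ^ j * F j) := by
    intro j
    rw [h4 j]
    have hkey := key_bound hq0 hq1 hα j
    have h6 : (0 : ℝ) ≤ q ^ j * F j := by have := hF0 j; positivity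
    calc q ^ j * F j * ∑ n ∈ Finset.range (j + 1), (q ^ α) ^ n * cQ q α (j - n)
        ≤ q ^ j * F j * (1 - q ^ α)⁻¹ := mul_le_mul_of_nonneg_left hkey h6
      _ = (1 - q ^ α)⁻¹ * (q ^ j * F j) := by ring
  have hGmarg : Summable (fun j => ∑' n, G (j, n)) :=
    (hGsum.hasSum.prod_fiberwise (fun j => (hGfac j).hasSum)).summable
  have hstep4 : ∑' j, ∑' n, G (j, n) ≤ (1 - q ^ α)⁻¹ * ∑' j, q ^ j * F j := by
    rw [← tsum_mul_left]
    exact Summable.tsum_le_tsum h5 hGmarg (hfs.mul_left _)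
  have hmain : ∑' n, u n ≤ (1 - q ^ α)⁻¹ * ∑' j, q ^ j * F j := by
    rw [hstep1]
    calc ∑' p : ℕ × ℕ, a p ≤ ∑' p : ℕ × ℕ, G p := hstep2
      _ = ∑' j, ∑' n, G (j, n) := hstep3
      _ ≤ (1 - q ^ α)⁻¹ * ∑' j, q ^ j * F j := hstep4
  -- pointwise bound on the values of the fractional integral
  have hpow : ∀ n : ℕ, ((q : ℝ) ^ n) ^ α = (q ^ α) ^ n := by
    intro n
    rw [← Real.rpow_natCast q n, ← Real.rpow_natCast (q ^ α) n,
      ← Real.rpow_mul hq0.le, ← Real.rpow_mul hq0.le, mul_comm]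
  have key_pt : ∀ n : ℕ, q ^ n * |Iq q α f (b * q ^ n)|
      ≤ (1 - q) * b ^ α / qGamma q α * u n := by
    intro n
    have hx : (0 : ℝ) < b * q ^ n := by positivity
    have hxne : (b * q ^ n : ℝ) ≠ 0 := ne_of_gt hx
    have hje : jackson q (b * q ^ n) (fun t => qPoch q (q * t / (b * q ^ n)) (α - 1) * f t)
        = (1 - q) * (b * q ^ n)
          * ∑' m : ℕ, q ^ m * (cQ q α m * f (b * q ^ (n + m))) := by
      rw [jackson]
      congr 1
      apply tsum_congr
      intro m
      have harg : q * (b * q ^ n * q ^ m) / (b * q ^ n) = q ^ (m + 1) := by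
        field_simp
        ring
      have hx' : b * q ^ n * q ^ m = b * q ^ (n + m) := by rw [pow_add]; ring
      show q ^ m * (qPoch q (q * (b * q ^ n * q ^ m) / (b * q ^ n)) (α - 1)
          * f (b * q ^ n * q ^ m)) = q ^ m * (cQ q α m * f (b * q ^ (n + m)))
      rw [harg, qpoch_eq_cQ hq0 hq1 hα m, hx']
    have habs : |∑' m : ℕ, q ^ m * (cQ q α m * f (b * q ^ (n + m)))| ≤ I n := by
      have h1 : Summable (fun m : ℕ => ‖q ^ m * (cQ q α m * f (b * q ^ (n + m)))‖) := by
        apply (hshift n).congr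
        intro m
        rw [Real.norm_eq_abs, abs_mul, abs_mul, abs_of_nonneg (pow_nonneg hq0.le m),
          abs_of_nonneg (hc0 m)]
      calc |∑' m : ℕ, q ^ m * (cQ q α m * f (b * q ^ (n + m)))|
          ≤ ∑' m : ℕ, ‖q ^ m * (cQ q α m * f (b * q ^ (n + m)))‖ := by
            rw [← Real.norm_eq_abs]
            exact norm_tsum_le_tsum_norm h1
        _ = I n := by
            rw [hI]
            apply tsum_congr
            intro m
            rw [Real.norm_eq_abs, abs_mul, abs_mul, abs_of_nonneg (pow_nonneg hq0.le m),
              abs_of_nonneg (hc0 m)]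
    have hA0 : (0 : ℝ) ≤ (b * q ^ n) ^ (α - 1) / qGamma q α := by
      have := Real.rpow_nonneg hx.le (α - 1)
      positivity
    have hB0 : (0 : ℝ) ≤ (1 - q) * (b * q ^ n) := by positivity
    have hIq : Iq q α f (b * q ^ n)
        = (b * q ^ n) ^ (α - 1) / qGamma q α
          * ((1 - q) * (b * q ^ n) * ∑' m : ℕ, q ^ m * (cQ q α m * f (b * q ^ (n + m)))) := by
      rw [Iq, if_neg (ne_of_gt hα), hje]
    have hxpow : (b * q ^ n) ^ (α - 1) * (b * q ^ n) = b ^ α * (q ^ α) ^ n := by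
      rw [← Real.rpow_add_one hxne (α - 1), show α - 1 + 1 = α by ring,
        Real.mul_rpow hb.le (pow_nonneg hq0.le n), hpow n]
    calc q ^ n * |Iq q α f (b * q ^ n)|
        = q ^ n * ((b * q ^ n) ^ (α - 1) / qGamma q α * ((1 - q) * (b * q ^ n))
            * |∑' m : ℕ, q ^ m * (cQ q α m * f (b * q ^ (n + m)))|) := by
          rw [hIq, abs_mul, abs_mul, abs_of_nonneg hA0, abs_of_nonneg hB0]
          ring
      _ ≤ q ^ n * ((b * q ^ n) ^ (α - 1) / qGamma q α * ((1 - q) * (b * q ^ n)) * I n) := by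
          apply mul_le_mul_of_nonneg_left _ (by positivity)
          apply mul_le_mul_of_nonneg_left habs
          positivity
      _ = (1 - q) / qGamma q α * ((b * q ^ n) ^ (α - 1) * (b * q ^ n) * (q ^ n * I n)) := by
          ring
      _ = (1 - q) * b ^ α / qGamma q α * u n := by
          rw [hxpow, hu]
          ring
  -- conclusion
  have hsum_lhs0 : ∀ n : ℕ, 0 ≤ q ^ n * |Iq q α f (b * q ^ n)| := fun n => by positivity
  have hKu : Summable (fun n => (1 - q) * b ^ α / qGamma q α * u n) := hu_sum.mul_left _
  have hsum_lhs : Summable (fun n : ℕ => q ^ n * |Iq q α f (b * q ^ n)|) :=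
    Summable.of_nonneg_of_le hsum_lhs0 key_pt hKu
  have hbα : 0 < b ^ α := Real.rpow_pos_of_pos hb α
  set T := ∑' j : ℕ, q ^ j * F j with hT
  have hT0 : 0 ≤ T := tsum_nonneg (fun j => mul_nonneg (by positivity) (hF0 j))
  have htsum1 : ∑' n : ℕ, q ^ n * |Iq q α f (b * q ^ n)|
      ≤ (1 - q) * b ^ α / qGamma q α * ∑' n, u n := by
    rw [← tsum_mul_left]
    exact Summable.tsum_le_tsum key_pt hsum_lhs hKu
  have hfinal : ∑' n : ℕ, q ^ n * |Iq q α f (b * q ^ n)|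
      ≤ (1 - q) * b ^ α / qGamma q α * ((1 - q ^ α)⁻¹ * T) := by
    refine htsum1.trans ?_
    exact mul_le_mul_of_nonneg_left hmain (by positivity)
  have hcoef : (1 - q) * b ^ α / qGamma q α * ((1 - q ^ α)⁻¹ * T)
      = b ^ α / qGamma q (α + 1) * T := by
    rw [hΓrec]
    field_simp
  have hL : L1qNorm q b (fun x => Iq q α f x)
      = (1 - q) * b * ∑' n : ℕ, q ^ n * |Iq q α f (b * q ^ n)| := rfl
  have hR : L1qNorm q b f = (1 - q) * b * T := by rw [hT, hF]; rfl
  rw [hL, hR]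
  calc (1 - q) * b * ∑' n : ℕ, q ^ n * |Iq q α f (b * q ^ n)|
      ≤ (1 - q) * b * ((1 - q) * b ^ α / qGamma q α * ((1 - q ^ α)⁻¹ * T)) := by
        apply mul_le_mul_of_nonneg_left hfinal (by positivity)
    _ = b ^ α / qGamma q (α + 1) * ((1 - q) * b * T) := by
        rw [hcoef]
        ring
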